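/- The product-join of two 2-connected bipartite graphs H_1 and H_2 (along parts A_1 and A_2) is 2-connected, provided H_1 and H_2 each have at least 3 vertices. -/
import Mathlib

/-- The product-join of bipartite graphs `H₁` (on `A₁ ⊕ B₁`) and `H₂` (on `A₂ ⊕ B₂`) along
`A₁` and `A₂`: the bipartite graph with parts `A₁ × A₂` and `(A₁ × B₂) ⊕ (B₁ × A₂)`, where
`(a₁, a₂)` is adjacent to `(a₁, b₂)` whenever `a₂ ~ b₂` in `H₂`, and to `(b₁, a₂)` whenever
`a₁ ~ b₁` in `H₁`. -/
def productJoin {A₁ B₁ A₂ B₂ : Type} (H₁ : SimpleGraph (A₁ ⊕ B₁))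
    (H₂ : SimpleGraph (A₂ ⊕ B₂)) :
    SimpleGraph ((A₁ × A₂) ⊕ ((A₁ × B₂) ⊕ (B₁ × A₂))) :=
  SimpleGraph.fromRel (fun x y =>
    (∃ a₁ a₂ b₂, x = Sum.inl (a₁, a₂) ∧ y = Sum.inr (Sum.inl (a₁, b₂)) ∧
        H₂.Adj (Sum.inl a₂) (Sum.inr b₂)) ∨
    (∃ a₁ a₂ b₁, x = Sum.inl (a₁, a₂) ∧ y = Sum.inr (Sum.inr (b₁, a₂)) ∧
        H₁.Adj (Sum.inl a₁) (Sum.inr b₁)))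

/-- A graph on `A ⊕ B` is bipartite with parts `A` and `B`: all edges go between the two
parts. -/
def BipartiteOn {A B : Type} (H : SimpleGraph (A ⊕ B)) : Prop :=
  (∀ a a' : A, ¬ H.Adj (Sum.inl a) (Sum.inl a')) ∧
  (∀ b b' : B, ¬ H.Adj (Sum.inr b) (Sum.inr b'))

/-- A graph is 2-connected if it is connected, has at least 3 vertices, and remains
connected after deleting any single vertex. -/
def TwoConnectedSG {V : Type} (G : SimpleGraph V) : Prop :=
  G.Connected ∧ 3 ≤ Nat.card V ∧ ∀ v : V, (G.induce {u : V | u ≠ v}).Connected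

open SimpleGraph Sum

/- ### Auxiliary lemmas -/

lemma PJaux.exists_adj_of_connected {V : Type} {G : SimpleGraph V} (h : G.Connected)
    (hnt : Nontrivial V) (v : V) : ∃ w, G.Adj v w := by
  obtain ⟨u, hu⟩ := exists_ne v
  obtain ⟨p⟩ := h (u := v) (v := u)
  cases p with
  | nil => exact absurd rfl hu
  | cons h _ => exact ⟨_, h⟩

lemma PJaux.nontrivial_ne {V : Type} (h3 : 3 ≤ Nat.card V) (v : V) :
    Nontrivial {u : V // u ≠ v} := by
  have hfin : Finite V := Nat.finite_of_card_ne_zero (by omega)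
  have hnt : Nontrivial V := Finite.one_lt_card_iff_nontrivial.mp (by omega)
  by_contra h
  rw [not_nontrivial_iff_subsingleton] at h
  obtain ⟨a, ha⟩ := exists_ne v
  have hsurj : Function.Surjective (fun b : Bool => if b then v else a) := by
    intro x
    by_cases hx : x = v
    · exact ⟨true, hx.symm⟩
    · refine ⟨false, ?_⟩
      have := h.elim (a := ⟨a, ha⟩) (b := ⟨x, hx⟩)
      simpa using congrArg Subtype.val this
  have := Nat.card_le_card_of_surjective _ hsurj
  simp [Nat.card_eq_fintype_card] at this
  omega

lemma PJaux.nontrivial_ne_set {V : Type} (h3 : 3 ≤ Nat.card V) (v : V) :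
    Nontrivial ({u : V | u ≠ v} : Set V) :=
  PJaux.nontrivial_ne h3 v

/-- mapping reachability into an induced subgraph. -/
lemma PJaux.reach_induce {V W : Type} {G : SimpleGraph V} {G' : SimpleGraph W}
    {T : Set W} (f : V → W) (hadj : ∀ ⦃x y⦄, G.Adj x y → G'.Adj (f x) (f y))
    (hmem : ∀ x, f x ∈ T) {x y : V} (h : G.Reachable x y) :
    (G'.induce T).Reachable ⟨f x, hmem x⟩ ⟨f y, hmem y⟩ := by
  let g : G →g G'.induce T :=
    ⟨fun u => ⟨f u, hmem u⟩, fun hxy => by simpa using hadj hxy⟩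
  exact h.map g

/-- mapping reachability of an induced subgraph into an induced subgraph. -/
lemma PJaux.reach_induce' {V W : Type} {G : SimpleGraph V} {G' : SimpleGraph W}
    {S : Set V} {T : Set W} (f : V → W) (hadj : ∀ ⦃x y⦄, G.Adj x y → G'.Adj (f x) (f y))
    (hmem : ∀ x ∈ S, f x ∈ T) {x y : V} (hx : x ∈ S) (hy : y ∈ S)
    (h : (G.induce S).Reachable ⟨x, hx⟩ ⟨y, hy⟩) :
    (G'.induce T).Reachable ⟨f x, hmem x hx⟩ ⟨f y, hmem y hy⟩ := by
  let g : G.induce S →g G'.induce T :=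
    ⟨fun u => ⟨f u.1, hmem u.1 u.2⟩, fun hxy => by simpa using hadj (by simpa using hxy)⟩
  exact h.map g

lemma PJaux.reach_map {V W : Type} {G : SimpleGraph V} {G' : SimpleGraph W}
    (f : V → W) (hadj : ∀ ⦃x y⦄, G.Adj x y → G'.Adj (f x) (f y))
    {x y : V} (h : G.Reachable x y) : G'.Reachable (f x) (f y) :=
  h.map ⟨f, fun hxy => hadj hxy⟩

/-- In a connected bipartite graph with at least two vertices, every right vertex has a
left neighbour. -/
lemma PJaux.neighbor_inr {A B : Type} {H : SimpleGraph (A ⊕ B)} (hb : BipartiteOn H)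
    (hc : H.Connected) (hnt : Nontrivial (A ⊕ B)) (b : B) :
    ∃ a : A, H.Adj (inl a) (inr b) := by
  obtain ⟨w, hw⟩ := PJaux.exists_adj_of_connected hc hnt (inr b)
  cases w with
  | inl a => exact ⟨a, hw.symm⟩
  | inr b' => exact absurd hw (hb.2 _ _)

/-- In a 2-connected bipartite graph, every right vertex has a left neighbour avoiding a
given left vertex. -/
lemma PJaux.neighbor_inr_del {A B : Type} {H : SimpleGraph (A ⊕ B)} {a' : A}
    (hb : BipartiteOn H)
    (hdel : (H.induce {x | x ≠ inl a'}).Connected) (hcard : 3 ≤ Nat.card (A ⊕ B))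
    (b : B) : ∃ a : A, a ≠ a' ∧ H.Adj (inl a) (inr b) := by
  have hnt := PJaux.nontrivial_ne_set hcard (inl a' : A ⊕ B)
  obtain ⟨⟨y, hy⟩, hadj⟩ := PJaux.exists_adj_of_connected hdel hnt
    ⟨inr b, by simp [Set.mem_setOf_eq]⟩
  have hAdj : H.Adj (inr b) y := by simpa using hadj
  cases y with
  | inl a => exact ⟨a, by simpa [Set.mem_setOf_eq] using hy, hAdj.symm⟩
  | inr b' => exact absurd hAdj (hb.2 _ _)

/-- The parts of a 2-connected bipartite graph each have at least two elements. -/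
lemma PJaux.parts {A B : Type} {H : SimpleGraph (A ⊕ B)} (hb : BipartiteOn H)
    (hc : H.Connected) (hdel : ∀ v, (H.induce {u | u ≠ v}).Connected)
    (hcard : 3 ≤ Nat.card (A ⊕ B)) :
    Nonempty A ∧ Nonempty B ∧ (∀ a : A, ∃ a', a' ≠ a) ∧ (∀ b : B, ∃ b', b' ≠ b) := by
  have hfin : Finite (A ⊕ B) := Nat.finite_of_card_ne_zero (by omega)
  have hnt : Nontrivial (A ⊕ B) := Finite.one_lt_card_iff_nontrivial.mp (by omega)
  obtain ⟨v⟩ := hc.nonempty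
  have hAB : Nonempty A ∧ Nonempty B := by
    obtain ⟨w, hw⟩ := PJaux.exists_adj_of_connected hc hnt v
    cases v with
    | inl a =>
      cases w with
      | inl a' => exact absurd hw (hb.1 _ _)
      | inr b => exact ⟨⟨a⟩, ⟨b⟩⟩
    | inr b =>
      cases w with
      | inl a => exact ⟨⟨a⟩, ⟨b⟩⟩
      | inr b' => exact absurd hw (hb.2 _ _)
  refine ⟨hAB.1, hAB.2, ?_, ?_⟩
  · intro a
    by_contra h'
    push_neg at h'
    have hnt' := PJaux.nontrivial_ne_set hcard (inl a : A ⊕ B)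
    obtain ⟨x⟩ := hnt'.to_nonempty
    obtain ⟨⟨y, hy⟩, hadj⟩ := PJaux.exists_adj_of_connected (hdel (inl a)) hnt' x
    have hAdj : H.Adj x.1 y := by simpa using hadj
    have hx : x.1 ≠ inl a := x.2
    match x, y with
    | ⟨inl a₀, hx0⟩, _ => exact hx0 (by rw [h' a₀])
    | ⟨inr b₀, _⟩, inl a₀ => exact hy (by rw [h' a₀])
    | ⟨inr b₀, _⟩, inr b₁ => exact absurd hAdj (hb.2 _ _)
  · intro b
    by_contra h'
    push_neg at h'
    have hnt' := PJaux.nontrivial_ne_set hcard (inr b : A ⊕ B)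
    obtain ⟨x⟩ := hnt'.to_nonempty
    obtain ⟨⟨y, hy⟩, hadj⟩ := PJaux.exists_adj_of_connected (hdel (inr b)) hnt' x
    have hAdj : H.Adj x.1 y := by simpa using hadj
    match x, y with
    | ⟨inr b₀, hx0⟩, _ => exact hx0 (by rw [h' b₀])
    | ⟨inl a₀, _⟩, inr b₀ => exact hy (by rw [h' b₀])
    | ⟨inl a₀, _⟩, inl a₁ => exact absurd hAdj (hb.1 _ _)

section PJ
variable {A₁ B₁ A₂ B₂ : Type} {H₁ : SimpleGraph (A₁ ⊕ B₁)} {H₂ : SimpleGraph (A₂ ⊕ B₂)}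

lemma PJaux.pj_adj_r {a₁ : A₁} {a₂ : A₂} {b₂ : B₂} (h : H₂.Adj (inl a₂) (inr b₂)) :
    (productJoin H₁ H₂).Adj (inl (a₁, a₂)) (inr (inl (a₁, b₂))) := by
  rw [productJoin, fromRel_adj]
  exact ⟨by simp, Or.inl (Or.inl ⟨a₁, a₂, b₂, rfl, rfl, h⟩)⟩

lemma PJaux.pj_adj_l {a₁ : A₁} {b₁ : B₁} {a₂ : A₂} (h : H₁.Adj (inl a₁) (inr b₁)) :
    (productJoin H₁ H₂).Adj (inl (a₁, a₂)) (inr (inr (b₁, a₂))) := by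
  rw [productJoin, fromRel_adj]
  exact ⟨by simp, Or.inl (Or.inr ⟨a₁, a₂, b₁, rfl, rfl, h⟩)⟩

/-- the fiber of `H₂` over `a₁ : A₁`. -/
def PJaux.fib₁ (B₁ : Type) (a₁ : A₁) : (A₂ ⊕ B₂) → ((A₁ × A₂) ⊕ ((A₁ × B₂) ⊕ (B₁ × A₂))) :=
  Sum.elim (fun a₂ => inl (a₁, a₂)) (fun b₂ => inr (inl (a₁, b₂)))

/-- the fiber of `H₁` over `a₂ : A₂`. -/
def PJaux.fib₂ (B₂ : Type) (a₂ : A₂) : (A₁ ⊕ B₁) → ((A₁ × A₂) ⊕ ((A₁ × B₂) ⊕ (B₁ × A₂))) :=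
  Sum.elim (fun a₁ => inl (a₁, a₂)) (fun b₁ => inr (inr (b₁, a₂)))

lemma PJaux.fib₁_adj (hb₂ : BipartiteOn H₂) (a₁ : A₁) :
    ∀ ⦃x y : A₂ ⊕ B₂⦄, H₂.Adj x y →
      (productJoin H₁ H₂).Adj (PJaux.fib₁ B₁ a₁ x) (PJaux.fib₁ B₁ a₁ y) := by
  rintro (a₂ | b₂) (a₂' | b₂') h
  · exact absurd h (hb₂.1 _ _)
  · exact PJaux.pj_adj_r h
  · exact (PJaux.pj_adj_r h.symm).symm
  · exact absurd h (hb₂.2 _ _)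

lemma PJaux.fib₂_adj (hb₁ : BipartiteOn H₁) (a₂ : A₂) :
    ∀ ⦃x y : A₁ ⊕ B₁⦄, H₁.Adj x y →
      (productJoin H₁ H₂).Adj (PJaux.fib₂ B₂ a₂ x) (PJaux.fib₂ B₂ a₂ y) := by
  rintro (a₁ | b₁) (a₁' | b₁') h
  · exact absurd h (hb₁.1 _ _)
  · exact PJaux.pj_adj_l h
  · exact (PJaux.pj_adj_l h.symm).symm
  · exact absurd h (hb₁.2 _ _)

end PJ

theorem productJoin_twoConnected {A₁ B₁ A₂ B₂ : Type}
    (H₁ : SimpleGraph (A₁ ⊕ B₁)) (H₂ : SimpleGraph (A₂ ⊕ B₂))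
    (hb₁ : BipartiteOn H₁) (hb₂ : BipartiteOn H₂)
    (h₁ : TwoConnectedSG H₁) (h₂ : TwoConnectedSG H₂)
    (hcard₁ : 3 ≤ Nat.card (A₁ ⊕ B₁)) (hcard₂ : 3 ≤ Nat.card (A₂ ⊕ B₂)) :
    TwoConnectedSG (productJoin H₁ H₂) := by
  obtain ⟨h₁c, -, h₁del⟩ := h₁
  obtain ⟨h₂c, -, h₂del⟩ := h₂
  have hfin₁ : Finite (A₁ ⊕ B₁) := Nat.finite_of_card_ne_zero (by omega)
  have hfin₂ : Finite (A₂ ⊕ B₂) := Nat.finite_of_card_ne_zero (by omega)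
  have hnt₁ : Nontrivial (A₁ ⊕ B₁) := Finite.one_lt_card_iff_nontrivial.mp (by omega)
  have hnt₂ : Nontrivial (A₂ ⊕ B₂) := Finite.one_lt_card_iff_nontrivial.mp (by omega)
  obtain ⟨⟨a₁0⟩, ⟨b₁0⟩, hA₁, hB₁⟩ := PJaux.parts hb₁ h₁c h₁del hcard₁
  obtain ⟨⟨a₂0⟩, ⟨b₂0⟩, hA₂, hB₂⟩ := PJaux.parts hb₂ h₂c h₂del hcard₂
  haveI : Finite A₁ := Finite.of_injective (inl : A₁ → A₁ ⊕ B₁) inl_injective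
  haveI : Finite B₁ := Finite.of_injective (inr : B₁ → A₁ ⊕ B₁) inr_injective
  haveI : Finite A₂ := Finite.of_injective (inl : A₂ → A₂ ⊕ B₂) inl_injective
  haveI : Finite B₂ := Finite.of_injective (inr : B₂ → A₂ ⊕ B₂) inr_injective
  haveI : Nonempty A₁ := ⟨a₁0⟩
  haveI : Nonempty B₁ := ⟨b₁0⟩
  haveI : Nonempty A₂ := ⟨a₂0⟩
  haveI : Nonempty B₂ := ⟨b₂0⟩
  -- cardinality
  have hcardV : 3 ≤ Nat.card ((A₁ × A₂) ⊕ ((A₁ × B₂) ⊕ (B₁ × A₂))) := by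
    rw [Nat.card_sum, Nat.card_sum]
    have p1 : 0 < Nat.card (A₁ × A₂) := Nat.card_pos
    have p2 : 0 < Nat.card (A₁ × B₂) := Nat.card_pos
    have p3 : 0 < Nat.card (B₁ × A₂) := Nat.card_pos
    omega
  -- neighbours of non-grid vertices
  have hnbrR : ∀ b₂ : B₂, ∃ a₂ : A₂, H₂.Adj (inl a₂) (inr b₂) :=
    PJaux.neighbor_inr hb₂ h₂c hnt₂
  have hnbrL : ∀ b₁ : B₁, ∃ a₁ : A₁, H₁.Adj (inl a₁) (inr b₁) :=
    PJaux.neighbor_inr hb₁ h₁c hnt₁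
  refine ⟨?_, hcardV, ?_⟩
  · -- connectedness
    rw [connected_iff]
    refine ⟨?_, ⟨inl (a₁0, a₂0)⟩⟩
    have anchor : ∀ u, (productJoin H₁ H₂).Reachable u (inl (a₁0, a₂0)) := by
      have grid : ∀ (a₁ : A₁) (a₂ : A₂),
          (productJoin H₁ H₂).Reachable (inl (a₁, a₂)) (inl (a₁0, a₂0)) := by
        intro a₁ a₂
        have r1 : (productJoin H₁ H₂).Reachable (inl (a₁, a₂)) (inl (a₁0, a₂)) :=
          PJaux.reach_map (PJaux.fib₂ B₂ a₂) (PJaux.fib₂_adj hb₁ a₂)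
            (h₁c.preconnected (inl a₁) (inl a₁0))
        have r2 : (productJoin H₁ H₂).Reachable (inl (a₁0, a₂)) (inl (a₁0, a₂0)) :=
          PJaux.reach_map (PJaux.fib₁ B₁ a₁0) (PJaux.fib₁_adj hb₂ a₁0)
            (h₂c.preconnected (inl a₂) (inl a₂0))
        exact r1.trans r2
      rintro (⟨a₁, a₂⟩ | (⟨a₁, b₂⟩ | ⟨b₁, a₂⟩))
      · exact grid a₁ a₂
      · obtain ⟨a₂, ha⟩ := hnbrR b₂
        exact (PJaux.pj_adj_r ha).symm.reachable.trans (grid a₁ a₂)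
      · obtain ⟨a₁, ha⟩ := hnbrL b₁
        exact (PJaux.pj_adj_l ha).symm.reachable.trans (grid a₁ a₂)
    exact fun u w => (anchor u).trans (anchor w).symm
  · -- 2-connectedness
    intro v
    rw [connected_iff]
    constructor
    · rcases v with ⟨a₁s, a₂s⟩ | (⟨a₁s, b₂s⟩ | ⟨b₁s, a₂s⟩)
      · -- v = inl (a₁s, a₂s)
        obtain ⟨av₁, hav₁⟩ := hA₁ a₁s
        obtain ⟨av₂, hav₂⟩ := hA₂ a₂s
        have hanch : (inl (av₁, av₂) : (A₁ × A₂) ⊕ ((A₁ × B₂) ⊕ (B₁ × A₂)))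
            ∈ {u | u ≠ inl (a₁s, a₂s)} := by simp [Set.mem_setOf_eq, hav₁]
        have move₂ : ∀ (a₂ : A₂), a₂ ≠ a₂s → ∀ (a₁ a₁' : A₁) h h',
            ((productJoin H₁ H₂).induce {u | u ≠ inl (a₁s, a₂s)}).Reachable
              ⟨inl (a₁, a₂), h⟩ ⟨inl (a₁', a₂), h'⟩ := by
          intro a₂ ha₂ a₁ a₁' h h'
          exact PJaux.reach_induce (PJaux.fib₂ B₂ a₂) (PJaux.fib₂_adj hb₁ a₂)
            (fun x => by rcases x with c | c <;> simp [PJaux.fib₂, Set.mem_setOf_eq, ha₂])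
            (h₁c.preconnected (inl a₁) (inl a₁'))
        have move₁ : ∀ (a₁ : A₁), a₁ ≠ a₁s → ∀ (a₂ a₂' : A₂) h h',
            ((productJoin H₁ H₂).induce {u | u ≠ inl (a₁s, a₂s)}).Reachable
              ⟨inl (a₁, a₂), h⟩ ⟨inl (a₁, a₂'), h'⟩ := by
          intro a₁ ha₁ a₂ a₂' h h'
          exact PJaux.reach_induce (PJaux.fib₁ B₁ a₁) (PJaux.fib₁_adj hb₂ a₁)
            (fun x => by rcases x with c | c <;> simp [PJaux.fib₁, Set.mem_setOf_eq, ha₁])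
            (h₂c.preconnected (inl a₂) (inl a₂'))
        have grid : ∀ (a₁ : A₁) (a₂ : A₂) (h : _ ∈ _),
            ((productJoin H₁ H₂).induce {u | u ≠ inl (a₁s, a₂s)}).Reachable
              ⟨inl (a₁, a₂), h⟩ ⟨inl (av₁, av₂), hanch⟩ := by
          intro a₁ a₂ h
          by_cases ha₂ : a₂ = a₂s
          · subst ha₂
            have ha₁ : a₁ ≠ a₁s := fun h' => h (by rw [h'])
            exact (move₁ a₁ ha₁ a₂ av₂ h (by simp [Set.mem_setOf_eq, ha₁])).trans
              (move₂ av₂ hav₂ a₁ av₁ (by simp [Set.mem_setOf_eq, ha₁]) hanch)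
          · exact (move₂ a₂ ha₂ a₁ av₁ h (by simp [Set.mem_setOf_eq, hav₁])).trans
              (move₁ av₁ hav₁ a₂ av₂ (by simp [Set.mem_setOf_eq, hav₁]) hanch)
        have key : ∀ (u) (hu : u ∈ {u | u ≠ inl (a₁s, a₂s)}),
            ((productJoin H₁ H₂).induce {u | u ≠ inl (a₁s, a₂s)}).Reachable
              ⟨u, hu⟩ ⟨inl (av₁, av₂), hanch⟩ := by
          rintro (⟨a₁, a₂⟩ | (⟨a₁, b₂⟩ | ⟨b₁, a₂⟩)) hu
          · exact grid a₁ a₂ hu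
          · obtain ⟨a₂, hg, hadj⟩ : ∃ a₂ : A₂,
                (inl (a₁, a₂) : (A₁ × A₂) ⊕ ((A₁ × B₂) ⊕ (B₁ × A₂))) ≠ inl (a₁s, a₂s) ∧
                  H₂.Adj (inl a₂) (inr b₂) := by
              by_cases ha₁ : a₁ = a₁s
              · subst ha₁
                obtain ⟨a₂, ha₂, hadj⟩ :=
                  PJaux.neighbor_inr_del hb₂ (h₂del (inl a₂s)) hcard₂ b₂
                exact ⟨a₂, by simp [ha₂], hadj⟩
              · obtain ⟨a₂, hadj⟩ := hnbrR b₂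
                exact ⟨a₂, by simp [ha₁], hadj⟩
            have step : ((productJoin H₁ H₂).induce {u | u ≠ inl (a₁s, a₂s)}).Adj
                ⟨inl (a₁, a₂), hg⟩ ⟨inr (inl (a₁, b₂)), hu⟩ := by
              simpa using PJaux.pj_adj_r hadj
            exact step.symm.reachable.trans (grid a₁ a₂ hg)
          · obtain ⟨a₁, hg, hadj⟩ : ∃ a₁ : A₁,
                (inl (a₁, a₂) : (A₁ × A₂) ⊕ ((A₁ × B₂) ⊕ (B₁ × A₂))) ≠ inl (a₁s, a₂s) ∧
                  H₁.Adj (inl a₁) (inr b₁) := by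
              by_cases ha₂ : a₂ = a₂s
              · subst ha₂
                obtain ⟨a₁, ha₁, hadj⟩ :=
                  PJaux.neighbor_inr_del hb₁ (h₁del (inl a₁s)) hcard₁ b₁
                exact ⟨a₁, by simp [ha₁], hadj⟩
              · obtain ⟨a₁, hadj⟩ := hnbrL b₁
                exact ⟨a₁, by simp [ha₂], hadj⟩
            have step : ((productJoin H₁ H₂).induce {u | u ≠ inl (a₁s, a₂s)}).Adj
                ⟨inl (a₁, a₂), hg⟩ ⟨inr (inr (b₁, a₂)), hu⟩ := by
              simpa using PJaux.pj_adj_l hadj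
            exact step.symm.reachable.trans (grid a₁ a₂ hg)
        rintro ⟨u, hu⟩ ⟨w, hw⟩
        exact (key u hu).trans (key w hw).symm
      · -- v = inr (inl (a₁s, b₂s))
        obtain ⟨av₁, hav₁⟩ := hA₁ a₁s
        have hanch : (inl (av₁, a₂0) : (A₁ × A₂) ⊕ ((A₁ × B₂) ⊕ (B₁ × A₂)))
            ∈ {u | u ≠ inr (inl (a₁s, b₂s))} := by simp [Set.mem_setOf_eq]
        have move₂ : ∀ (a₂ : A₂) (a₁ a₁' : A₁) h h',
            ((productJoin H₁ H₂).induce {u | u ≠ inr (inl (a₁s, b₂s))}).Reachable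
              ⟨inl (a₁, a₂), h⟩ ⟨inl (a₁', a₂), h'⟩ := by
          intro a₂ a₁ a₁' h h'
          exact PJaux.reach_induce (PJaux.fib₂ B₂ a₂) (PJaux.fib₂_adj hb₁ a₂)
            (fun x => by rcases x with c | c <;> simp [PJaux.fib₂, Set.mem_setOf_eq])
            (h₁c.preconnected (inl a₁) (inl a₁'))
        have move₁ : ∀ (a₁ : A₁), a₁ ≠ a₁s → ∀ (a₂ a₂' : A₂) h h',
            ((productJoin H₁ H₂).induce {u | u ≠ inr (inl (a₁s, b₂s))}).Reachable
              ⟨inl (a₁, a₂), h⟩ ⟨inl (a₁, a₂'), h'⟩ := by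
          intro a₁ ha₁ a₂ a₂' h h'
          exact PJaux.reach_induce (PJaux.fib₁ B₁ a₁) (PJaux.fib₁_adj hb₂ a₁)
            (fun x => by rcases x with c | c <;> simp [PJaux.fib₁, Set.mem_setOf_eq, ha₁])
            (h₂c.preconnected (inl a₂) (inl a₂'))
        have grid : ∀ (a₁ : A₁) (a₂ : A₂) (h : _ ∈ _),
            ((productJoin H₁ H₂).induce {u | u ≠ inr (inl (a₁s, b₂s))}).Reachable
              ⟨inl (a₁, a₂), h⟩ ⟨inl (av₁, a₂0), hanch⟩ := by
          intro a₁ a₂ h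
          exact (move₂ a₂ a₁ av₁ h (by simp [Set.mem_setOf_eq])).trans
            (move₁ av₁ hav₁ a₂ a₂0 (by simp [Set.mem_setOf_eq]) hanch)
        have key : ∀ (u) (hu : u ∈ {u | u ≠ inr (inl (a₁s, b₂s))}),
            ((productJoin H₁ H₂).induce {u | u ≠ inr (inl (a₁s, b₂s))}).Reachable
              ⟨u, hu⟩ ⟨inl (av₁, a₂0), hanch⟩ := by
          rintro (⟨a₁, a₂⟩ | (⟨a₁, b₂⟩ | ⟨b₁, a₂⟩)) hu
          · exact grid a₁ a₂ hu
          · obtain ⟨a₂, hadj⟩ := hnbrR b₂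
            have step : ((productJoin H₁ H₂).induce {u | u ≠ inr (inl (a₁s, b₂s))}).Adj
                ⟨inl (a₁, a₂), by simp [Set.mem_setOf_eq]⟩ ⟨inr (inl (a₁, b₂)), hu⟩ := by
              simpa using PJaux.pj_adj_r hadj
            exact step.symm.reachable.trans (grid a₁ a₂ _)
          · obtain ⟨a₁, hadj⟩ := hnbrL b₁
            have step : ((productJoin H₁ H₂).induce {u | u ≠ inr (inl (a₁s, b₂s))}).Adj
                ⟨inl (a₁, a₂), by simp [Set.mem_setOf_eq]⟩ ⟨inr (inr (b₁, a₂)), hu⟩ := by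
              simpa using PJaux.pj_adj_l hadj
            exact step.symm.reachable.trans (grid a₁ a₂ _)
        rintro ⟨u, hu⟩ ⟨w, hw⟩
        exact (key u hu).trans (key w hw).symm
      · -- v = inr (inr (b₁s, a₂s))
        obtain ⟨av₂, hav₂⟩ := hA₂ a₂s
        have hanch : (inl (a₁0, av₂) : (A₁ × A₂) ⊕ ((A₁ × B₂) ⊕ (B₁ × A₂)))
            ∈ {u | u ≠ inr (inr (b₁s, a₂s))} := by simp [Set.mem_setOf_eq]
        have move₁ : ∀ (a₁ : A₁) (a₂ a₂' : A₂) h h',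
            ((productJoin H₁ H₂).induce {u | u ≠ inr (inr (b₁s, a₂s))}).Reachable
              ⟨inl (a₁, a₂), h⟩ ⟨inl (a₁, a₂'), h'⟩ := by
          intro a₁ a₂ a₂' h h'
          exact PJaux.reach_induce (PJaux.fib₁ B₁ a₁) (PJaux.fib₁_adj hb₂ a₁)
            (fun x => by rcases x with c | c <;> simp [PJaux.fib₁, Set.mem_setOf_eq])
            (h₂c.preconnected (inl a₂) (inl a₂'))
        have move₂ : ∀ (a₂ : A₂), a₂ ≠ a₂s → ∀ (a₁ a₁' : A₁) h h',
            ((productJoin H₁ H₂).induce {u | u ≠ inr (inr (b₁s, a₂s))}).Reachable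
              ⟨inl (a₁, a₂), h⟩ ⟨inl (a₁', a₂), h'⟩ := by
          intro a₂ ha₂ a₁ a₁' h h'
          exact PJaux.reach_induce (PJaux.fib₂ B₂ a₂) (PJaux.fib₂_adj hb₁ a₂)
            (fun x => by rcases x with c | c <;> simp [PJaux.fib₂, Set.mem_setOf_eq, ha₂])
            (h₁c.preconnected (inl a₁) (inl a₁'))
        have grid : ∀ (a₁ : A₁) (a₂ : A₂) (h : _ ∈ _),
            ((productJoin H₁ H₂).induce {u | u ≠ inr (inr (b₁s, a₂s))}).Reachable
              ⟨inl (a₁, a₂), h⟩ ⟨inl (a₁0, av₂), hanch⟩ := by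
          intro a₁ a₂ h
          exact (move₁ a₁ a₂ av₂ h (by simp [Set.mem_setOf_eq])).trans
            (move₂ av₂ hav₂ a₁ a₁0 (by simp [Set.mem_setOf_eq]) hanch)
        have key : ∀ (u) (hu : u ∈ {u | u ≠ inr (inr (b₁s, a₂s))}),
            ((productJoin H₁ H₂).induce {u | u ≠ inr (inr (b₁s, a₂s))}).Reachable
              ⟨u, hu⟩ ⟨inl (a₁0, av₂), hanch⟩ := by
          rintro (⟨a₁, a₂⟩ | (⟨a₁, b₂⟩ | ⟨b₁, a₂⟩)) hu
          · exact grid a₁ a₂ hu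
          · obtain ⟨a₂, hadj⟩ := hnbrR b₂
            have step : ((productJoin H₁ H₂).induce {u | u ≠ inr (inr (b₁s, a₂s))}).Adj
                ⟨inl (a₁, a₂), by simp [Set.mem_setOf_eq]⟩ ⟨inr (inl (a₁, b₂)), hu⟩ := by
              simpa using PJaux.pj_adj_r hadj
            exact step.symm.reachable.trans (grid a₁ a₂ _)
          · obtain ⟨a₁, hadj⟩ := hnbrL b₁
            have step : ((productJoin H₁ H₂).induce {u | u ≠ inr (inr (b₁s, a₂s))}).Adj
                ⟨inl (a₁, a₂), by simp [Set.mem_setOf_eq]⟩ ⟨inr (inr (b₁, a₂)), hu⟩ := by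
              simpa using PJaux.pj_adj_l hadj
            exact step.symm.reachable.trans (grid a₁ a₂ _)
        rintro ⟨u, hu⟩ ⟨w, hw⟩
        exact (key u hu).trans (key w hw).symm
    · exact (PJaux.nontrivial_ne_set hcardV v).to_nonempty
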